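/- With T as above restricted to the 5-dimensional complex space of symmetric h-trace-free (0,2)-tensors, the eigenvalue-0 eigenspace is exactly the 2-dimensional space of symmetric trace-free tensors e_{kl} with e_{kl} Y^l = 0, and the eigenvalue-3/4 eigenspace is the 2-dimensional span of Y_{(k} v_{l)} for vectors v orthogonal to Y. -/
import Mathlib


noncomputable section

/-- Complex (0,2)-tensors on a 3-dimensional real inner product space, in components
w.r.t. an orthonormal basis (so `h_{ij} = δ_{ij}`). -/
abbrev Tens2 := Fin 3 → Fin 3 → ℂ

/-- Kronecker delta. -/
def kd (a b : Fin 3) : ℂ := if a = b then 1 else 0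

/-- The coefficients `T^{kl}{}_{ij} = (3/2) Y_{(i} δ_{j)}{}^{(k} Y^{l)} − 3 Y_i Y_j Y^k Y^l
+ (1/2) h_{ij} Y^k Y^l + (1/2) h^{kl} Y_i Y_j − (1/6) h_{ij} h^{kl}` in an orthonormal
basis, `Y i = Y_i`. -/
def Tcoef (Y : Fin 3 → ℝ) (k l i j : Fin 3) : ℂ :=
  (3/8) * ((Y i : ℂ) * kd j k * (Y l : ℂ) + (Y i : ℂ) * kd j l * (Y k : ℂ)
          + (Y j : ℂ) * kd i k * (Y l : ℂ) + (Y j : ℂ) * kd i l * (Y k : ℂ))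
  - 3 * (Y i : ℂ) * (Y j : ℂ) * (Y k : ℂ) * (Y l : ℂ)
  + (1/2) * kd i j * (Y k : ℂ) * (Y l : ℂ)
  + (1/2) * kd k l * (Y i : ℂ) * (Y j : ℂ)
  - (1/6) * kd i j * kd k l

set_option maxHeartbeats 1000000 in
lemma key (Y : Fin 3 → ℝ) (E : Tens2) (hsym : ∀ i j, E i j = E j i)
    (htr : ∑ i, E i i = 0) (i j : Fin 3) :
    (∑ k, ∑ l, Tcoef Y k l i j * E k l)
      = (3/4) * ((Y i:ℂ) * (E j 0 * (Y 0:ℂ) + E j 1 * (Y 1:ℂ) + E j 2 * (Y 2:ℂ)) + (Y j:ℂ) * (E i 0 * (Y 0:ℂ) + E i 1 * (Y 1:ℂ) + E i 2 * (Y 2:ℂ))) - 3 * (Y i:ℂ) * (Y j:ℂ) * ((Y 0:ℂ) * (E 0 0 * (Y 0:ℂ) + E 0 1 * (Y 1:ℂ) + E 0 2 * (Y 2:ℂ)) + (Y 1:ℂ) * (E 1 0 * (Y 0:ℂ) + E 1 1 * (Y 1:ℂ) + E 1 2 * (Y 2:ℂ)) + (Y 2:ℂ) * (E 2 0 * (Y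 0:ℂ) + E 2 1 * (Y 1:ℂ) + E 2 2 * (Y 2:ℂ))) + (1/2) * kd i j * ((Y 0:ℂ) * (E 0 0 * (Y 0:ℂ) + E 0 1 * (Y 1:ℂ) + E 0 2 * (Y 2:ℂ)) + (Y 1:ℂ) * (E 1 0 * (Y 0:ℂ) + E 1 1 * (Y 1:ℂ) + E 1 2 * (Y 2:ℂ)) + (Y 2:ℂ) * (E 2 0 * (Y 0:ℂ) + E 2 1 * (Y 1:ℂ) + E 2 2 * (Y 2:ℂ))) := by
  have h10 := hsym 1 0
  have h20 := hsym 2 0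
  have h21 := hsym 2 1
  have h22 : E 2 2 = -E 0 0 - E 1 1 := by
    have h := htr; rw [Fin.sum_univ_three] at h; linear_combination h
  have k00 : kd 0 0 = 1 := rfl
  have k01 : kd 0 1 = 0 := rfl
  have k02 : kd 0 2 = 0 := rfl
  have k10 : kd 1 0 = 0 := rfl
  have k11 : kd 1 1 = 1 := rfl
  have k12 : kd 1 2 = 0 := rfl
  have k20 : kd 2 0 = 0 := rfl
  have k21 : kd 2 1 = 0 := rfl
  have k22 : kd 2 2 = 1 := rfl
  fin_cases i <;> fin_cases j <;>
    simp only [Fin.reduceFinMk, Fin.isValue, Fin.sum_univ_three] <;>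
    simp only [Tcoef, Fin.isValue, k00, k01, k02, k10, k11, k12, k20, k21, k22] <;>
    simp only [h10, h20, h21, h22] <;>
    ring


theorem stmt_7 (Y : Fin 3 → ℝ) (hunit : ∑ i, Y i * Y i = 1) :
    ∀ E : Tens2, (∀ i j, E i j = E j i) → (∑ i, E i i = 0) →
      (((∀ i j, (∑ k, ∑ l, Tcoef Y k l i j * E k l) = 0)
          ↔ (∀ k, ∑ l, E k l * (Y l : ℂ) = 0))
      ∧ ((∀ i j, (∑ k, ∑ l, Tcoef Y k l i j * E k l) = (3/4) * E i j)
          ↔ (∃ v : Fin 3 → ℂ, (∑ i, v i * (Y i : ℂ)) = 0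
              ∧ ∀ k l, E k l = ((Y k : ℂ) * v l + (Y l : ℂ) * v k) / 2))) := by
  intro E hsym htr
  have kk00 : kd 0 0 = 1 := rfl
  have kk01 : kd 0 1 = 0 := rfl
  have kk02 : kd 0 2 = 0 := rfl
  have kk10 : kd 1 0 = 0 := rfl
  have kk11 : kd 1 1 = 1 := rfl
  have kk12 : kd 1 2 = 0 := rfl
  have kk20 : kd 2 0 = 0 := rfl
  have kk21 : kd 2 1 = 0 := rfl
  have kk22 : kd 2 2 = 1 := rfl
  have hC : (Y 0:ℂ) * (Y 0:ℂ) + (Y 1:ℂ) * (Y 1:ℂ) + (Y 2:ℂ) * (Y 2:ℂ) = 1 := by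
    have h := hunit; rw [Fin.sum_univ_three] at h; exact_mod_cast h
  have hkey := key Y E hsym htr
  refine ⟨⟨?_, ?_⟩, ?_, ?_⟩
  · intro h
    simp only [hkey] at h
    have e00 := h 0 0
    have e01 := h 0 1
    have e02 := h 0 2
    have e10 := h 1 0
    have e11 := h 1 1
    have e12 := h 1 2
    have e20 := h 2 0
    have e21 := h 2 1
    have e22 := h 2 2
    simp only [kk00, kk01, kk02, kk10, kk11, kk12, kk20, kk21, kk22] at e00 e01 e02 e10 e11 e12 e20 e21 e22
    have hB0 : (3:ℂ)/4 * (E 0 0 * (Y 0:ℂ) + E 0 1 * (Y 1:ℂ) + E 0 2 * (Y 2:ℂ)) - 7/4 * ((Y 0:ℂ) * (E 0 0 * (Y 0:ℂ) + E 0 1 * (Y 1:ℂ) + E 0 2 * (Y 2:ℂ)) + (Y 1:ℂ) * (E 1 0 * (Y 0:ℂ) + E 1 1 * (Y 1:ℂ) + E 1 2 * (Y 2:ℂ)) + (Y 2:ℂ) * (E 2 0 * (Y 0:ℂ) + E 2 1 * (Y 1:ℂ) + E 2 2 * (Y 2:ℂ))) * (Y 0:ℂ) = 0 := by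
      linear_combination (Y 0:ℂ) * e00 + (Y 1:ℂ) * e01 + (Y 2:ℂ) * e02 + (-((3:ℂ)/4 * (E 0 0 * (Y 0:ℂ) + E 0 1 * (Y 1:ℂ) + E 0 2 * (Y 2:ℂ)) - 3 * (Y 0:ℂ) * ((Y 0:ℂ) * (E 0 0 * (Y 0:ℂ) + E 0 1 * (Y 1:ℂ) + E 0 2 * (Y 2:ℂ)) + (Y 1:ℂ) * (E 1 0 * (Y 0:ℂ) + E 1 1 * (Y 1:ℂ) + E 1 2 * (Y 2:ℂ)) + (Y 2:ℂ) * (E 2 0 * (Y 0:ℂ) + E 2 1 * (Y 1:ℂ) + E 2 2 * (Y 2:ℂ))))) * hC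
    have hB1 : (3:ℂ)/4 * (E 1 0 * (Y 0:ℂ) + E 1 1 * (Y 1:ℂ) + E 1 2 * (Y 2:ℂ)) - 7/4 * ((Y 0:ℂ) * (E 0 0 * (Y 0:ℂ) + E 0 1 * (Y 1:ℂ) + E 0 2 * (Y 2:ℂ)) + (Y 1:ℂ) * (E 1 0 * (Y 0:ℂ) + E 1 1 * (Y 1:ℂ) + E 1 2 * (Y 2:ℂ)) + (Y 2:ℂ) * (E 2 0 * (Y 0:ℂ) + E 2 1 * (Y 1:ℂ) + E 2 2 * (Y 2:ℂ))) * (Y 1:ℂ) = 0 := by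
      linear_combination (Y 0:ℂ) * e10 + (Y 1:ℂ) * e11 + (Y 2:ℂ) * e12 + (-((3:ℂ)/4 * (E 1 0 * (Y 0:ℂ) + E 1 1 * (Y 1:ℂ) + E 1 2 * (Y 2:ℂ)) - 3 * (Y 1:ℂ) * ((Y 0:ℂ) * (E 0 0 * (Y 0:ℂ) + E 0 1 * (Y 1:ℂ) + E 0 2 * (Y 2:ℂ)) + (Y 1:ℂ) * (E 1 0 * (Y 0:ℂ) + E 1 1 * (Y 1:ℂ) + E 1 2 * (Y 2:ℂ)) + (Y 2:ℂ) * (E 2 0 * (Y 0:ℂ) + E 2 1 * (Y 1:ℂ) + E 2 2 * (Y 2:ℂ))))) * hC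
    have hB2 : (3:ℂ)/4 * (E 2 0 * (Y 0:ℂ) + E 2 1 * (Y 1:ℂ) + E 2 2 * (Y 2:ℂ)) - 7/4 * ((Y 0:ℂ) * (E 0 0 * (Y 0:ℂ) + E 0 1 * (Y 1:ℂ) + E 0 2 * (Y 2:ℂ)) + (Y 1:ℂ) * (E 1 0 * (Y 0:ℂ) + E 1 1 * (Y 1:ℂ) + E 1 2 * (Y 2:ℂ)) + (Y 2:ℂ) * (E 2 0 * (Y 0:ℂ) + E 2 1 * (Y 1:ℂ) + E 2 2 * (Y 2:ℂ))) * (Y 2:ℂ) = 0 := by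
      linear_combination (Y 0:ℂ) * e20 + (Y 1:ℂ) * e21 + (Y 2:ℂ) * e22 + (-((3:ℂ)/4 * (E 2 0 * (Y 0:ℂ) + E 2 1 * (Y 1:ℂ) + E 2 2 * (Y 2:ℂ)) - 3 * (Y 2:ℂ) * ((Y 0:ℂ) * (E 0 0 * (Y 0:ℂ) + E 0 1 * (Y 1:ℂ) + E 0 2 * (Y 2:ℂ)) + (Y 1:ℂ) * (E 1 0 * (Y 0:ℂ) + E 1 1 * (Y 1:ℂ) + E 1 2 * (Y 2:ℂ)) + (Y 2:ℂ) * (E 2 0 * (Y 0:ℂ) + E 2 1 * (Y 1:ℂ) + E 2 2 * (Y 2:ℂ))))) * hC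
    have hS : ((Y 0:ℂ) * (E 0 0 * (Y 0:ℂ) + E 0 1 * (Y 1:ℂ) + E 0 2 * (Y 2:ℂ)) + (Y 1:ℂ) * (E 1 0 * (Y 0:ℂ) + E 1 1 * (Y 1:ℂ) + E 1 2 * (Y 2:ℂ)) + (Y 2:ℂ) * (E 2 0 * (Y 0:ℂ) + E 2 1 * (Y 1:ℂ) + E 2 2 * (Y 2:ℂ))) = 0 := by
      linear_combination (-1 : ℂ) * ((Y 0:ℂ) * hB0 + (Y 1:ℂ) * hB1 + (Y 2:ℂ) * hB2) + (-(7:ℂ)/4 * ((Y 0:ℂ) * (E 0 0 * (Y 0:ℂ) + E 0 1 * (Y 1:ℂ) + E 0 2 * (Y 2:ℂ)) + (Y 1:ℂ) * (E 1 0 * (Y 0:ℂ) + E 1 1 * (Y 1:ℂ) + E 1 2 * (Y 2:ℂ)) + (Y 2:ℂ) * (E 2 0 * (Y 0:ℂ) + E 2 1 * (Y 1:ℂ) + E 2 2 * (Y 2:ℂ)))) * hC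
    intro k
    fin_cases k <;> simp only [Fin.reduceFinMk] <;> rw [Fin.sum_univ_three]
    · linear_combination (4:ℂ)/3 * hB0 + (7:ℂ)/3 * (Y 0:ℂ) * hS
    · linear_combination (4:ℂ)/3 * hB1 + (7:ℂ)/3 * (Y 1:ℂ) * hS
    · linear_combination (4:ℂ)/3 * hB2 + (7:ℂ)/3 * (Y 2:ℂ) * hS
  · intro hw i j
    rw [hkey i j]
    have hw' : ∀ k : Fin 3, E k 0 * (Y 0:ℂ) + E k 1 * (Y 1:ℂ) + E k 2 * (Y 2:ℂ) = 0 := by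
      intro k; have := hw k; rwa [Fin.sum_univ_three] at this
    simp only [hw']
    ring
  · intro h
    simp only [hkey] at h
    have g00 := h 0 0
    have g01 := h 0 1
    have g02 := h 0 2
    have g10 := h 1 0
    have g11 := h 1 1
    have g12 := h 1 2
    have g20 := h 2 0
    have g21 := h 2 1
    have g22 := h 2 2
    simp only [kk00, kk01, kk02, kk10, kk11, kk12, kk20, kk21, kk22] at g00 g01 g02 g10 g11 g12 g20 g21 g22
    have hc0 : ((Y 0:ℂ) * (E 0 0 * (Y 0:ℂ) + E 0 1 * (Y 1:ℂ) + E 0 2 * (Y 2:ℂ)) + (Y 1:ℂ) * (E 1 0 * (Y 0:ℂ) + E 1 1 * (Y 1:ℂ) + E 1 2 * (Y 2:ℂ)) + (Y 2:ℂ) * (E 2 0 * (Y 0:ℂ) + E 2 1 * (Y 1:ℂ) + E 2 2 * (Y 2:ℂ))) * (Y 0:ℂ) = 0 := by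
      linear_combination (-(4:ℂ)/7) * ((Y 0:ℂ) * g00 + (Y 1:ℂ) * g01 + (Y 2:ℂ) * g02) + ((3:ℂ)/7 * (E 0 0 * (Y 0:ℂ) + E 0 1 * (Y 1:ℂ) + E 0 2 * (Y 2:ℂ)) - 12/7 * ((Y 0:ℂ) * (E 0 0 * (Y 0:ℂ) + E 0 1 * (Y 1:ℂ) + E 0 2 * (Y 2:ℂ)) + (Y 1:ℂ) * (E 1 0 * (Y 0:ℂ) + E 1 1 * (Y 1:ℂ) + E 1 2 * (Y 2:ℂ)) + (Y 2:ℂ) * (E 2 0 * (Y 0:ℂ) + E 2 1 * (Y 1:ℂ) + E 2 2 * (Y 2:ℂ))) * (Y 0:ℂ)) * hC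
    have hc1 : ((Y 0:ℂ) * (E 0 0 * (Y 0:ℂ) + E 0 1 * (Y 1:ℂ) + E 0 2 * (Y 2:ℂ)) + (Y 1:ℂ) * (E 1 0 * (Y 0:ℂ) + E 1 1 * (Y 1:ℂ) + E 1 2 * (Y 2:ℂ)) + (Y 2:ℂ) * (E 2 0 * (Y 0:ℂ) + E 2 1 * (Y 1:ℂ) + E 2 2 * (Y 2:ℂ))) * (Y 1:ℂ) = 0 := by
      linear_combination (-(4:ℂ)/7) * ((Y 0:ℂ) * g10 + (Y 1:ℂ) * g11 + (Y 2:ℂ) * g12) + ((3:ℂ)/7 * (E 1 0 * (Y 0:ℂ) + E 1 1 * (Y 1:ℂ) + E 1 2 * (Y 2:ℂ)) - 12/7 * ((Y 0:ℂ) * (E 0 0 * (Y 0:ℂ) + E 0 1 * (Y 1:ℂ) + E 0 2 * (Y 2:ℂ)) + (Y 1:ℂ) * (E 1 0 * (Y 0:ℂ) + E 1 1 * (Y 1:ℂ) + E 1 2 * (Y 2:ℂ)) + (Y 2:ℂ) * (E 2 0 * (Y 0:ℂ) + E 2 1 * (Y 1:ℂ) + E 2 2 * (Y 2:ℂ)))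 * (Y 1:ℂ)) * hC
    have hc2 : ((Y 0:ℂ) * (E 0 0 * (Y 0:ℂ) + E 0 1 * (Y 1:ℂ) + E 0 2 * (Y 2:ℂ)) + (Y 1:ℂ) * (E 1 0 * (Y 0:ℂ) + E 1 1 * (Y 1:ℂ) + E 1 2 * (Y 2:ℂ)) + (Y 2:ℂ) * (E 2 0 * (Y 0:ℂ) + E 2 1 * (Y 1:ℂ) + E 2 2 * (Y 2:ℂ))) * (Y 2:ℂ) = 0 := by
      linear_combination (-(4:ℂ)/7) * ((Y 0:ℂ) * g20 + (Y 1:ℂ) * g21 + (Y 2:ℂ) * g22) + ((3:ℂ)/7 * (E 2 0 * (Y 0:ℂ) + E 2 1 * (Y 1:ℂ) + E 2 2 * (Y 2:ℂ)) - 12/7 * ((Y 0:ℂ) * (E 0 0 * (Y 0:ℂ) + E 0 1 * (Y 1:ℂ) + E 0 2 * (Y 2:ℂ)) + (Y 1:ℂ) * (E 1 0 * (Y 0:ℂ) + E 1 1 * (Y 1:ℂ) + E 1 2 * (Y 2:ℂ)) + (Y 2:ℂ) * (E 2 0 * (Y 0:ℂ) + E 2 1 * (Y 1:ℂ) + E 2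 2 * (Y 2:ℂ))) * (Y 2:ℂ)) * hC
    have hS2 : ((Y 0:ℂ) * (E 0 0 * (Y 0:ℂ) + E 0 1 * (Y 1:ℂ) + E 0 2 * (Y 2:ℂ)) + (Y 1:ℂ) * (E 1 0 * (Y 0:ℂ) + E 1 1 * (Y 1:ℂ) + E 1 2 * (Y 2:ℂ)) + (Y 2:ℂ) * (E 2 0 * (Y 0:ℂ) + E 2 1 * (Y 1:ℂ) + E 2 2 * (Y 2:ℂ))) = 0 := by
      linear_combination (Y 0:ℂ) * hc0 + (Y 1:ℂ) * hc1 + (Y 2:ℂ) * hc2 + (-(1:ℂ)) * ((Y 0:ℂ) * (E 0 0 * (Y 0:ℂ) + E 0 1 * (Y 1:ℂ) + E 0 2 * (Y 2:ℂ)) + (Y 1:ℂ) * (E 1 0 * (Y 0:ℂ) + E 1 1 * (Y 1:ℂ) + E 1 2 * (Y 2:ℂ)) + (Y 2:ℂ) * (E 2 0 * (Y 0:ℂ) + E 2 1 * (Y 1:ℂ) + E 2 2 * (Y 2:ℂ))) * hC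
    refine ⟨fun k => 2 * (∑ l, E k l * (Y l : ℂ)), ?_, ?_⟩
    · simp only [Fin.sum_univ_three]
      linear_combination (2:ℂ) * hS2
    · intro k l
      fin_cases k <;> fin_cases l <;> simp only [Fin.reduceFinMk, Fin.sum_univ_three]
      · linear_combination (-(4:ℂ)/3) * g00 + ((2:ℂ)/3 - 4 * (Y 0:ℂ) * (Y 0:ℂ)) * hS2
      · linear_combination (-(4:ℂ)/3) * g01 + ((0:ℂ) - 4 * (Y 0:ℂ) * (Y 1:ℂ)) * hS2
      · linear_combination (-(4:ℂ)/3) * g02 + ((0:ℂ) - 4 * (Y 0:ℂ) * (Y 2:ℂ)) * hS2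
      · linear_combination (-(4:ℂ)/3) * g10 + ((0:ℂ) - 4 * (Y 1:ℂ) * (Y 0:ℂ)) * hS2
      · linear_combination (-(4:ℂ)/3) * g11 + ((2:ℂ)/3 - 4 * (Y 1:ℂ) * (Y 1:ℂ)) * hS2
      · linear_combination (-(4:ℂ)/3) * g12 + ((0:ℂ) - 4 * (Y 1:ℂ) * (Y 2:ℂ)) * hS2
      · linear_combination (-(4:ℂ)/3) * g20 + ((0:ℂ) - 4 * (Y 2:ℂ) * (Y 0:ℂ)) * hS2
      · linear_combination (-(4:ℂ)/3) * g21 + ((0:ℂ) - 4 * (Y 2:ℂ) * (Y 1:ℂ)) * hS2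
      · linear_combination (-(4:ℂ)/3) * g22 + ((2:ℂ)/3 - 4 * (Y 2:ℂ) * (Y 2:ℂ)) * hS2
  · rintro ⟨v, hv, hvE⟩ i j
    rw [Fin.sum_univ_three] at hv
    rw [hkey i j]
    simp only [hvE]
    linear_combination ((3:ℂ)/4 * (Y i:ℂ) * (Y j:ℂ) - 3 * (Y i:ℂ) * (Y j:ℂ) * ((Y 0:ℂ)*(Y 0:ℂ) + (Y 1:ℂ)*(Y 1:ℂ) + (Y 2:ℂ)*(Y 2:ℂ)) + kd i j / 2 * ((Y 0:ℂ)*(Y 0:ℂ) + (Y 1:ℂ)*(Y 1:ℂ) + (Y 2:ℂ)*(Y 2:ℂ))) * hv + (3:ℂ)/8 * ((Y i:ℂ) * v j + (Y j:ℂ) * v i) * hC
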